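/- Let 0 < a < b, α ∈ (0,1), n a positive integer, ΔT = ln(b/a)/n, and t_k = a·exp(k·ΔT) for k ∈ {0,…,n}. Then for all integers 1 ≤ k ≤ N ≤ n, 0 ≤ ∫_{t_{k−1}}^{t_k} (ln(t_N/τ))^{−α} · (1/τ) dτ ≤ (ΔT)^{1−α}/(1−α). -/

import Mathlib

open Real Set intervalIntegral

lemma rpow_add_le_add_rpow_real {x y p : ℝ} (hx : 0 ≤ x) (hy : 0 ≤ y)
    (hp : 0 ≤ p) (hp1 : p ≤ 1) : (x + y) ^ p ≤ x ^ p + y ^ p := by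
  have h := NNReal.rpow_add_le_add_rpow x.toNNReal y.toNNReal hp hp1
  have hxy : ((x.toNNReal + y.toNNReal : NNReal) : ℝ) = x + y := by
    simp [Real.coe_toNNReal, hx, hy]
  calc (x + y) ^ p = ((x.toNNReal + y.toNNReal : NNReal) : ℝ) ^ p := by rw [hxy]
    _ = (((x.toNNReal + y.toNNReal) ^ p : NNReal) : ℝ) := by rw [NNReal.coe_rpow]
    _ ≤ ((x.toNNReal ^ p + y.toNNReal ^ p : NNReal) : ℝ) := by exact_mod_cast h
    _ = x ^ p + y ^ p := by
        push_cast [NNReal.coe_rpow]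
        rw [Real.coe_toNNReal x hx, Real.coe_toNNReal y hy]

/-- Bounds for the kernel integral over one cell of the logarithmic
grid `t_k = a·exp(k·ΔT)`, `ΔT = ln(b/a)/n`:
`0 ≤ ∫_{t_{k−1}}^{t_k} (ln(t_N/τ))^{−α}·(1/τ) dτ ≤ ΔT^{1−α}/(1−α)`. -/
theorem hadamard_kernel_cell_integral_bounds
    (a b α : ℝ) (ha : 0 < a) (hab : a < b) (hα : α ∈ Set.Ioo (0 : ℝ) 1)
    (n : ℕ) (hn : 0 < n)
    (k N : ℕ) (hk : 1 ≤ k) (hkN : k ≤ N) (hNn : N ≤ n) :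
    let ΔT : ℝ := Real.log (b / a) / n
    let t : ℕ → ℝ := fun j => a * Real.exp (j * ΔT)
    0 ≤ (∫ τ in (t (k - 1))..(t k), Real.log (t N / τ) ^ (-α) * (1 / τ)) ∧
      (∫ τ in (t (k - 1))..(t k), Real.log (t N / τ) ^ (-α) * (1 / τ))
        ≤ ΔT ^ (1 - α) / (1 - α) := by
  intro ΔT t
  have hα0 := hα.1
  have hα1 := hα.2
  have hΔT : 0 < ΔT :=
    div_pos (Real.log_pos ((one_lt_div ha).mpr hab)) (by exact_mod_cast hn)
  have htN : 0 < t N := mul_pos ha (Real.exp_pos _)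
  set c₁ : ℝ := ((N : ℝ) - k) * ΔT with hc₁def
  set c₂ : ℝ := ((N : ℝ) - k + 1) * ΔT with hc₂def
  have hc₁ : 0 ≤ c₁ :=
    mul_nonneg (sub_nonneg.2 (by exact_mod_cast hkN)) hΔT.le
  have hc₂eq : c₂ = c₁ + ΔT := by rw [hc₁def, hc₂def]; ring
  have hc : c₁ < c₂ := by rw [hc₂eq]; linarith
  set φ : ℝ → ℝ := fun u => t N * Real.exp (-u) with hφdef
  have hanti : StrictAnti φ := fun x y hxy => by
    exact mul_lt_mul_of_pos_left (Real.exp_lt_exp.2 (neg_lt_neg hxy)) htN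
  have hφc₁ : φ c₁ = t k := by
    simp only [hφdef, t]
    rw [mul_assoc, ← Real.exp_add]
    congr 1
    rw [hc₁def]
    ring
  have hφc₂ : φ c₂ = t (k - 1) := by
    simp only [hφdef, t]
    rw [mul_assoc, ← Real.exp_add]
    congr 1
    rw [hc₂def]
    push_cast [Nat.cast_sub hk]
    ring
  have hφpos : ∀ u, 0 < φ u := fun u => mul_pos htN (Real.exp_pos _)
  have himg : φ '' Ioo c₁ c₂ = Ioo (t (k - 1)) (t k) := by
    ext τ
    constructor
    · rintro ⟨u, hu, rfl⟩
      exact ⟨hφc₂ ▸ hanti hu.2, hφc₁ ▸ hanti hu.1⟩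
    · intro hτ
      have hτpos : 0 < τ := lt_trans (hφc₂ ▸ hφpos c₂) hτ.1
      refine ⟨Real.log (t N / τ), ⟨?_, ?_⟩, ?_⟩
      · have : φ (Real.log (t N / τ)) = τ := by
          simp only [hφdef]
          rw [Real.log_div htN.ne' hτpos.ne', neg_sub, Real.exp_sub,
            Real.exp_log hτpos, Real.exp_log htN]
          field_simp
        have h2 : φ (Real.log (t N / τ)) < φ c₁ := by rw [this, hφc₁]; exact hτ.2
        exact hanti.lt_iff_gt.mp h2
      · have : φ (Real.log (t N / τ)) = τ := by
          simp only [hφdef]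
          rw [Real.log_div htN.ne' hτpos.ne', neg_sub, Real.exp_sub,
            Real.exp_log hτpos, Real.exp_log htN]
          field_simp
        have h2 : φ c₂ < φ (Real.log (t N / τ)) := by rw [this, hφc₂]; exact hτ.1
        exact hanti.lt_iff_gt.mp h2
      · simp only [hφdef]
        rw [Real.log_div htN.ne' hτpos.ne', neg_sub, Real.exp_sub,
          Real.exp_log hτpos, Real.exp_log htN]
        field_simp
  have hderiv : ∀ u ∈ Ioo c₁ c₂,
      HasDerivWithinAt φ (-(t N * Real.exp (-u))) (Ioo c₁ c₂) u := by
    intro u _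
    have h1 : HasDerivAt φ (t N * (Real.exp (-u) * (-1))) u :=
      ((hasDerivAt_neg u).exp.const_mul (t N))
    have h2 : t N * (Real.exp (-u) * (-1)) = -(t N * Real.exp (-u)) := by ring
    exact (h2 ▸ h1).hasDerivWithinAt
  have hlt : t (k - 1) < t k := by
    rw [← hφc₁, ← hφc₂]; exact hanti hc
  have hI : (∫ τ in (t (k - 1))..(t k), Real.log (t N / τ) ^ (-α) * (1 / τ))
      = ∫ u in c₁..c₂, u ^ (-α) := by
    rw [intervalIntegral.integral_of_le hlt.le,
      MeasureTheory.integral_Ioc_eq_integral_Ioo, ← himg,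
      MeasureTheory.integral_image_eq_integral_abs_deriv_smul measurableSet_Ioo hderiv
        (hanti.injective.injOn),
      intervalIntegral.integral_of_le hc.le,
      MeasureTheory.integral_Ioc_eq_integral_Ioo]
    apply MeasureTheory.setIntegral_congr_fun measurableSet_Ioo
    intro u hu
    have hupos : 0 < u := lt_of_le_of_lt hc₁ hu.1
    have hφu : 0 < t N * Real.exp (-u) := mul_pos htN (Real.exp_pos _)
    simp only [smul_eq_mul, hφdef]
    rw [abs_neg, abs_of_pos hφu]
    have hlog : Real.log (t N / (t N * Real.exp (-u))) = u := by
      rw [Real.exp_neg]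
      field_simp
      exact Real.log_exp u
    rw [hlog]
    field_simp
  have hval : (∫ u in c₁..c₂, u ^ (-α)) = (c₂ ^ (1 - α) - c₁ ^ (1 - α)) / (1 - α) := by
    rw [integral_rpow (Or.inl (by linarith : (-1 : ℝ) < -α)),
      show -α + 1 = 1 - α from by ring]
  have hpow_le : c₂ ^ (1 - α) ≤ c₁ ^ (1 - α) + ΔT ^ (1 - α) := by
    rw [hc₂eq]
    exact rpow_add_le_add_rpow_real hc₁ hΔT.le (by linarith) (by linarith)
  have hpow_mono : c₁ ^ (1 - α) ≤ c₂ ^ (1 - α) :=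
    Real.rpow_le_rpow hc₁ hc.le (by linarith)
  constructor
  · rw [hI, hval]
    apply div_nonneg (by linarith) (by linarith)
  · rw [hI, hval]
    gcongr
    · linarith
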